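/- Let A be an n×n real matrix all of whose principal minors are positive (a P-matrix). Then for every q ∈ ℝⁿ there exists a unique x ∈ ℝⁿ with x ≥ 0, Ax + q ≥ 0, and xᵀ(Ax+q) = 0. -/

import Mathlib

open Matrix

/-- `x` is a solution of the Linear Complementarity Problem LCP(A,q). -/
def IsLCPSol {n : ℕ} (A : Matrix (Fin n) (Fin n) ℝ) (q x : Fin n → ℝ) : Prop :=
  (∀ i, 0 ≤ x i) ∧ (∀ i, 0 ≤ (A.mulVec x + q) i) ∧ x ⬝ᵥ (A.mulVec x + q) = 0

/-- P-matrix property. -/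
def Pmat {n : ℕ} (A : Matrix (Fin n) (Fin n) ℝ) : Prop :=
  ∀ (r : ℕ) (f : Fin r → Fin n), StrictMono f → 0 < (A.submatrix f f).det

lemma Pmat.submatrix {n m : ℕ} {A : Matrix (Fin n) (Fin n) ℝ} (hA : Pmat A)
    {g : Fin m → Fin n} (hg : StrictMono g) : Pmat (A.submatrix g g) := by
  intro r f hf
  rw [Matrix.submatrix_submatrix]
  exact hA r (g ∘ f) (hg.comp hf)

lemma Pmat.det_pos {n : ℕ} {A : Matrix (Fin n) (Fin n) ℝ} (hA : Pmat A) : 0 < A.det := by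
  simpa using hA n id strictMono_id

/-- Determinant of a matrix whose `a`-th column is the `a`-th standard basis vector. -/
lemma det_updateColumn_single {m : ℕ} (M : Matrix (Fin (m + 1)) (Fin (m + 1)) ℝ)
    (a : Fin (m + 1)) :
    (M.updateCol a (Pi.single a 1)).det = (M.submatrix a.succAbove a.succAbove).det := by
  rw [det_succ_column _ a]
  rw [Finset.sum_eq_single a]
  · have h1 : (M.updateCol a (Pi.single a 1)).submatrix a.succAbove a.succAbove
        = M.submatrix a.succAbove a.succAbove := by
      ext i j
      simp [Matrix.updateCol_apply, Fin.succAbove_ne a j]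
    rw [h1]
    have : ((-1 : ℝ)) ^ (a : ℕ) * (-1) ^ (a : ℕ) = 1 := by
      rw [← pow_add, ← two_mul, pow_mul]; norm_num
    simp [pow_add, this, mul_assoc]
  · intro b _ hb
    simp [Matrix.updateCol_apply, Pi.single_eq_of_ne hb]
  · simp

lemma submatrix_add_diagonal {n m : ℕ} (B : Matrix (Fin n) (Fin n) ℝ) (d : Fin n → ℝ)
    {f : Fin m → Fin n} (hf : Function.Injective f) :
    (B + Matrix.diagonal d).submatrix f f = B.submatrix f f + Matrix.diagonal (d ∘ f) := by
  ext i j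
  by_cases h : i = j
  · subst h; simp [Matrix.diagonal_apply_eq]
  · simp [Matrix.diagonal_apply_ne _ (fun hc => h (hf hc)), Matrix.diagonal_apply_ne _ h]

lemma det_add_diagonal_pos : ∀ (m : ℕ) (B : Matrix (Fin m) (Fin m) ℝ), Pmat B →
    ∀ d : Fin m → ℝ, (∀ i, 0 ≤ d i) → 0 < (B + Matrix.diagonal d).det := by
  intro m
  induction m with
  | zero => intro B _ d _; simp [Matrix.det_fin_zero]
  | succ n ih =>
    intro B hB d hd
    -- inner induction on the support of d
    suffices H : ∀ s : Finset (Fin (n + 1)), ∀ d : Fin (n + 1) → ℝ, (∀ i, 0 ≤ d i) →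
        (∀ i ∉ s, d i = 0) → 0 < (B + Matrix.diagonal d).det by
      exact H Finset.univ d hd (fun i hi => absurd (Finset.mem_univ i) hi)
    intro s
    induction s using Finset.induction_on with
    | empty =>
      intro d _ hd0
      have : d = 0 := funext fun i => hd0 i (Finset.notMem_empty i)
      subst this
      have h0 : B + Matrix.diagonal (0 : Fin (n+1) → ℝ) = B := by
        ext i j; rcases eq_or_ne i j with h|h <;> simp [Matrix.diagonal_apply, h]
      rw [h0]; exact hB.det_pos
    | @insert a s ha ihs =>
      intro d hd hd0
      set d' : Fin (n + 1) → ℝ := Function.update d a 0 with hd'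
      have key : B + Matrix.diagonal d
          = Matrix.updateCol (B + Matrix.diagonal d') a
              (fun i => (B + Matrix.diagonal d') i a + d a • (Pi.single a 1 : Fin (n+1) → ℝ) i) := by
        ext i j
        simp only [Matrix.updateCol_apply, Matrix.add_apply]
        rcases eq_or_ne j a with hj | hj
        · rw [if_pos hj]
          rcases eq_or_ne i a with hi | hi
          · rw [hj, hi]
            simp [d', Matrix.diagonal_apply_eq]
          · rw [hj]
            simp [Matrix.diagonal_apply_ne _ hi, Pi.single_eq_of_ne hi]
        · rw [if_neg hj]
          rcases eq_or_ne i j with hij | hij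
          · rw [hij]
            simp [d', Matrix.diagonal_apply_eq, Function.update_of_ne hj]
          · simp [Matrix.diagonal_apply_ne _ hij]
      rw [key]
      have expand := Matrix.det_updateCol_add (B + Matrix.diagonal d') a
        (fun i => (B + Matrix.diagonal d') i a) (fun i => d a • (Pi.single a 1 : Fin (n+1) → ℝ) i)
      have heta : (fun i => (B + Matrix.diagonal d') i a + d a • (Pi.single a 1 : Fin (n+1) → ℝ) i)
          = ((fun i => (B + Matrix.diagonal d') i a) + fun i => d a • (Pi.single a 1 : Fin (n+1) → ℝ) i) := rfl
      rw [heta, expand]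
      rw [Matrix.updateCol_eq_self]
      have hsm : ((B + Matrix.diagonal d').updateCol a fun i => d a • (Pi.single a 1 : Fin (n+1) → ℝ) i).det
          = d a * ((B + Matrix.diagonal d').updateCol a (Pi.single a 1)).det := by
        have := Matrix.det_updateCol_smul (B + Matrix.diagonal d') a (d a) (Pi.single a 1)
        exact this
      rw [hsm, det_updateColumn_single]
      have h1 : 0 < (B + Matrix.diagonal d').det := by
        refine ihs d' (fun i => ?_) (fun i hi => ?_)
        · by_cases h : i = a
          · subst h; simp [d']
          · simpa [d', Function.update_of_ne h] using hd i
        · by_cases h : i = a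
          · subst h; simp [d']
          · rw [hd', Function.update_of_ne h]
            exact hd0 i (by simp [h, hi])
      have h2 : 0 ≤ d a * ((B + Matrix.diagonal d').submatrix a.succAbove a.succAbove).det := by
        refine mul_nonneg (hd a) (le_of_lt ?_)
        rw [submatrix_add_diagonal _ _ (Fin.succAbove_right_injective)]
        exact ih (B.submatrix a.succAbove a.succAbove)
          (hB.submatrix (Fin.strictMono_succAbove a)) (d' ∘ a.succAbove)
          (fun i => by
            by_cases h : a.succAbove i = a
            · exact absurd h (Fin.succAbove_ne a i)
            · simpa [d', Function.update_of_ne h] using hd (a.succAbove i))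
      linarith

lemma sign_nonreversal {n : ℕ} {A : Matrix (Fin n) (Fin n) ℝ} (hA : Pmat A)
    (z : Fin n → ℝ) (hz : ∀ i, z i * (A.mulVec z) i ≤ 0) : z = 0 := by
  by_contra hne
  classical
  set s : Finset (Fin n) := Finset.univ.filter (fun i => z i ≠ 0) with hs
  have hcard : s.card = s.card := rfl
  set f := s.orderEmbOfFin hcard with hf
  have hmemf : ∀ k, f k ∈ s := fun k => s.orderEmbOfFin_mem hcard k
  have hzf : ∀ k, z (f k) ≠ 0 := fun k => (Finset.mem_filter.mp (hmemf k)).2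
  have hsurj : ∀ i ∈ s, ∃ k, f k = i := by
    intro i hi
    have : i ∈ Set.range f := by
      rw [s.range_orderEmbOfFin hcard]
      exact Finset.mem_coe.mpr hi
    exact this
  have hsum : ∀ g : Fin n → ℝ, ∑ k, g (f k) = ∑ i ∈ s, g i := by
    intro g
    refine Finset.sum_bij (fun k _ => f k) (fun k _ => hmemf k)
      (fun a _ b _ h => f.injective h) ?_ (fun k _ => rfl)
    intro i hi
    rcases hsurj i hi with ⟨k, hk⟩
    exact ⟨k, Finset.mem_univ k, hk⟩
  set B := A.submatrix (fun k => f k) (fun k => f k) with hB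
  set w : Fin s.card → ℝ := fun k => z (f k) with hwdef
  have hmul : ∀ j, B.mulVec w j = A.mulVec z (f j) := by
    intro j
    show ∑ k, A (f j) (f k) * z (f k) = ∑ i, A (f j) i * z i
    rw [hsum (fun i => A (f j) i * z i)]
    refine Finset.sum_subset (Finset.subset_univ s) ?_
    intro i _ hi
    rcases Classical.em (z i = 0) with h | h
    · rw [h, mul_zero]
    · exact absurd (Finset.mem_filter.mpr ⟨Finset.mem_univ i, h⟩) hi
  set d : Fin s.card → ℝ := fun j => (-(B.mulVec w j * w j)) / (w j) ^ 2 with hd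
  have hdnn : ∀ j, 0 ≤ d j := by
    intro j
    apply div_nonneg _ (sq_nonneg _)
    have h1 := hz (f j)
    rw [← hmul j] at h1
    have h2 : w j * B.mulVec w j ≤ 0 := h1
    nlinarith [h2]
  have hMw : (B + Matrix.diagonal d).mulVec w = 0 := by
    funext j
    rw [Matrix.add_mulVec]
    simp only [Pi.add_apply, Matrix.mulVec_diagonal, Pi.zero_apply]
    have hwj : w j ≠ 0 := hzf j
    field_simp [hd]
    simp only [hd]
    rw [div_mul_eq_mul_div, neg_mul, neg_div, mul_assoc, ← sq,
      mul_div_cancel_right₀ _ (pow_ne_zero 2 hwj)]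
    ring
  have hw0 : w ≠ 0 := by
    rcases Function.ne_iff.mp hne with ⟨i, hi⟩
    have his : i ∈ s := Finset.mem_filter.mpr ⟨Finset.mem_univ i, by simpa using hi⟩
    rcases hsurj i his with ⟨k, hk⟩
    intro hcon
    apply hzf k
    rw [show z (f k) = w k from rfl, hcon]
    rfl
  have hdet0 : (B + Matrix.diagonal d).det = 0 :=
    (Matrix.exists_mulVec_eq_zero_iff).mp ⟨w, hw0, hMw⟩
  have hdetpos := det_add_diagonal_pos s.card B
    (hA.submatrix (s.orderEmbOfFin hcard).strictMono) d hdnn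
  rw [hdet0] at hdetpos
  exact lt_irrefl 0 hdetpos

def IsLCPSol' {n : ℕ} (A : Matrix (Fin n) (Fin n) ℝ) (q x : Fin n → ℝ) : Prop :=
  (∀ i, 0 ≤ x i) ∧ (∀ i, 0 ≤ (A.mulVec x + q) i) ∧ x ⬝ᵥ (A.mulVec x + q) = 0

lemma IsLCPSol'.comp_eq_zero {n : ℕ} {A : Matrix (Fin n) (Fin n) ℝ} {q x : Fin n → ℝ}
    (h : IsLCPSol' A q x) : ∀ i, x i * (A.mulVec x + q) i = 0 := by
  have h3 := h.2.2
  rw [dotProduct] at h3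
  intro i
  exact (Finset.sum_eq_zero_iff_of_nonneg
    (fun j _ => mul_nonneg (h.1 j) (h.2.1 j))).mp h3 i (Finset.mem_univ i)

lemma lcp_unique {n : ℕ} {A : Matrix (Fin n) (Fin n) ℝ} (hA : Pmat A) {q x y : Fin n → ℝ}
    (hx : IsLCPSol' A q x) (hy : IsLCPSol' A q y) : x = y := by
  have hcx := hx.comp_eq_zero
  have hcy := hy.comp_eq_zero
  have hz : ∀ i, (x - y) i * (A.mulVec (x - y)) i ≤ 0 := by
    intro i
    have e : (x - y) i * (A.mulVec (x - y)) i
        = x i * (A.mulVec x + q) i + y i * (A.mulVec y + q) i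
          - x i * (A.mulVec y + q) i - y i * (A.mulVec x + q) i := by
      simp only [Matrix.mulVec_sub, Pi.sub_apply, Pi.add_apply]
      ring
    rw [e, hcx i, hcy i]
    have h1 := mul_nonneg (hx.1 i) (hy.2.1 i)
    have h2 := mul_nonneg (hy.1 i) (hx.2.1 i)
    linarith
  have := sign_nonreversal hA (x - y) hz
  exact sub_eq_zero.mp this

/-- the positive-part "sign reversal energy" -/
noncomputable def gfun {n : ℕ} (B : Matrix (Fin n) (Fin n) ℝ) (z : Fin n → ℝ) : ℝ :=
  ∑ i, max (z i * (B.mulVec z) i) 0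

lemma gfun_nonneg {n : ℕ} (B : Matrix (Fin n) (Fin n) ℝ) (z : Fin n → ℝ) : 0 ≤ gfun B z :=
  Finset.sum_nonneg fun i _ => le_max_right _ _

lemma gfun_continuous {n : ℕ} (B : Matrix (Fin n) (Fin n) ℝ) : Continuous (gfun B) := by
  apply continuous_finset_sum
  intro i _
  have hmv : Continuous fun z : Fin n → ℝ => (B.mulVec z) i := by
    show Continuous fun z : Fin n → ℝ => ∑ j, B i j * z j
    exact continuous_finset_sum _ fun j _ => continuous_const.mul (continuous_apply j)
  exact ((continuous_apply i).mul hmv).max continuous_const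

lemma gfun_smul {n : ℕ} (B : Matrix (Fin n) (Fin n) ℝ) (c : ℝ) (hc : 0 ≤ c) (z : Fin n → ℝ) :
    gfun B (c • z) = c ^ 2 * gfun B z := by
  unfold gfun
  rw [Finset.mul_sum]
  refine Finset.sum_congr rfl fun i _ => ?_
  rw [Matrix.mulVec_smul]
  simp only [Pi.smul_apply, smul_eq_mul]
  rw [show c * z i * (c * B.mulVec z i) = c ^ 2 * (z i * B.mulVec z i) by ring]
  rw [mul_max_of_nonneg _ _ (by positivity : (0:ℝ) ≤ c ^ 2), mul_zero]

lemma gfun_pos {n : ℕ} {B : Matrix (Fin n) (Fin n) ℝ} (hB : Pmat B) {z : Fin n → ℝ}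
    (hz : z ≠ 0) : 0 < gfun B z := by
  rcases lt_or_eq_of_le (gfun_nonneg B z) with h | h
  · exact h
  · exfalso
    apply hz
    apply sign_nonreversal hB
    intro i
    have := (Finset.sum_eq_zero_iff_of_nonneg (fun j (_ : j ∈ Finset.univ) =>
      le_max_right (z j * (B.mulVec z) j) 0)).mp h.symm i (Finset.mem_univ i)
    by_contra hcon
    push_neg at hcon
    rw [max_eq_left hcon.le] at this
    exact absurd this (ne_of_gt hcon)

lemma exists_pmat_const {n : ℕ} {B : Matrix (Fin n) (Fin n) ℝ} (hB : Pmat B) :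
    ∃ m : ℝ, 0 < m ∧ ∀ z : Fin n → ℝ, m * ‖z‖ ^ 2 ≤ gfun B z := by
  rcases Nat.eq_zero_or_pos n with hn | hn
  · refine ⟨1, one_pos, fun z => ?_⟩
    subst hn
    have h0 : gfun B z = 0 := by simp [gfun]
    have hz : z = 0 := funext fun i => i.elim0
    rw [h0, hz, norm_zero]
    norm_num
  · have hne : (Metric.sphere (0 : Fin n → ℝ) 1).Nonempty := by
      have : Nonempty (Fin n) := ⟨⟨0, hn⟩⟩
      refine ⟨fun _ => 1, ?_⟩
      simp [pi_norm_const]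
    obtain ⟨z₀, hz₀s, hz₀min⟩ := (isCompact_sphere (0 : Fin n → ℝ) 1).exists_isMinOn hne
      (gfun_continuous B).continuousOn
    have hz₀norm : ‖z₀‖ = 1 := by simpa using hz₀s
    have hz₀ne : z₀ ≠ 0 := by
      intro h; rw [h, norm_zero] at hz₀norm; norm_num at hz₀norm
    refine ⟨gfun B z₀, gfun_pos hB hz₀ne, fun z => ?_⟩
    rcases eq_or_ne z 0 with hz | hz
    · subst hz; simp [gfun]
    · have hnz : ‖z‖ ≠ 0 := norm_ne_zero_iff.mpr hz
      set u : Fin n → ℝ := ‖z‖⁻¹ • z with hu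
      have hus : u ∈ Metric.sphere (0 : Fin n → ℝ) 1 := by
        simp [hu, norm_smul, abs_of_nonneg (inv_nonneg.mpr (norm_nonneg z)),
          inv_mul_cancel₀ hnz]
      have hmin := hz₀min hus
      have hgz : gfun B z = ‖z‖ ^ 2 * gfun B u := by
        have : z = ‖z‖ • u := by
          rw [hu, smul_smul, mul_inv_cancel₀ hnz, one_smul]
        rw [this, gfun_smul B _ (norm_nonneg z)]
        rw [← this]
      rw [hgz]
      have h2 : (0:ℝ) ≤ ‖z‖ ^ 2 := by positivity
      calc gfun B z₀ * ‖z‖ ^ 2 ≤ gfun B u * ‖z‖ ^ 2 := by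
            apply mul_le_mul_of_nonneg_right hmin h2
        _ = ‖z‖ ^ 2 * gfun B u := by ring

lemma sol_bound {n : ℕ} {B : Matrix (Fin n) (Fin n) ℝ} {m : ℝ}
    (hmle : ∀ z, m * ‖z‖ ^ 2 ≤ gfun B z) (hm : 0 < m) {q q' x y : Fin n → ℝ}
    (hx : IsLCPSol' B q x) (hy : IsLCPSol' B q' y) :
    m * ‖x - y‖ ≤ n * ‖q - q'‖ := by
  set z := x - y with hzdef
  have hterm : ∀ i, max (z i * (B.mulVec z) i) 0 ≤ ‖z‖ * ‖q - q'‖ := by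
    intro i
    have hcx := hx.comp_eq_zero i
    have hcy := hy.comp_eq_zero i
    have e : z i * (B.mulVec z) i
        = -(y i * (B.mulVec x + q) i) - x i * (B.mulVec y + q') i
          + x i * (B.mulVec x + q) i + y i * (B.mulVec y + q') i + z i * (q' - q) i := by
      simp only [hzdef, Matrix.mulVec_sub, Pi.sub_apply, Pi.add_apply]
      ring
    have h1 := mul_nonneg (hy.1 i) (hx.2.1 i)
    have h2 := mul_nonneg (hx.1 i) (hy.2.1 i)
    have hle : z i * (B.mulVec z) i ≤ z i * (q' - q) i := by
      rw [e, hcx, hcy]; linarith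
    have habs : z i * (q' - q) i ≤ ‖z‖ * ‖q - q'‖ := by
      calc z i * (q' - q) i ≤ |z i * (q' - q) i| := le_abs_self _
        _ = |z i| * |(q' - q) i| := abs_mul _ _
        _ ≤ ‖z‖ * ‖q - q'‖ := by
            apply mul_le_mul _ _ (abs_nonneg _) (norm_nonneg _)
            · rw [← Real.norm_eq_abs]; exact norm_le_pi_norm z i
            · rw [← Real.norm_eq_abs]
              calc ‖(q' - q) i‖ ≤ ‖q' - q‖ := norm_le_pi_norm (q' - q) i
                _ = ‖q - q'‖ := norm_sub_rev q' q
    exact max_le (hle.trans habs) (by positivity)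
  have hsum : gfun B z ≤ n * (‖z‖ * ‖q - q'‖) := by
    calc gfun B z ≤ ∑ _i : Fin n, ‖z‖ * ‖q - q'‖ := Finset.sum_le_sum (fun i _ => hterm i)
      _ = n * (‖z‖ * ‖q - q'‖) := by
          rw [Finset.sum_const, Finset.card_univ, Fintype.card_fin, nsmul_eq_mul]
  have hkey := (hmle z).trans hsum
  rcases eq_or_lt_of_le (norm_nonneg z) with h0 | h0
  · rw [← h0, mul_zero]
    positivity
  · nlinarith [hkey, h0]

lemma IsLCPSol'.smul {n : ℕ} {B : Matrix (Fin n) (Fin n) ℝ} {p x : Fin n → ℝ}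
    (h : IsLCPSol' B p x) {t : ℝ} (ht : 0 ≤ t) : IsLCPSol' B (t • p) (t • x) := by
  have hkey : B.mulVec (t • x) + t • p = t • (B.mulVec x + p) := by
    rw [Matrix.mulVec_smul, smul_add]
  refine ⟨fun i => mul_nonneg ht (h.1 i), fun i => ?_, ?_⟩
  · rw [hkey]
    exact mul_nonneg ht (h.2.1 i)
  · rw [hkey, smul_dotProduct, dotProduct_smul, h.2.2]
    simp

lemma lcp_exists : ∀ (n : ℕ) (A : Matrix (Fin n) (Fin n) ℝ), Pmat A →
    ∀ q : Fin n → ℝ, ∃ x, IsLCPSol' A q x := by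
  intro n
  induction n with
  | zero =>
    intro A _ q
    exact ⟨0, fun i => i.elim0, fun i => i.elim0, by simp [dotProduct]⟩
  | succ n ih =>
    intro A hA q
    classical
    set Ab : Matrix (Fin n) (Fin n) ℝ :=
      A.submatrix Fin.castSucc Fin.castSucc with hAbdef
    have hAbP : Pmat Ab := hA.submatrix Fin.strictMono_castSucc
    choose sol hsol using ih Ab hAbP
    have huniq : ∀ p x, IsLCPSol' Ab p x → x = sol p :=
      fun p x hx => lcp_unique hAbP hx (hsol p)
    obtain ⟨m, hm, hmle⟩ := exists_pmat_const hAbP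
    have hcont : Continuous sol := by
      have hlip : LipschitzWith (Real.toNNReal ((n : ℝ) / m)) sol := by
        apply LipschitzWith.of_dist_le_mul
        intro p p'
        have hb := sol_bound hmle hm (hsol p) (hsol p')
        rw [dist_eq_norm, dist_eq_norm, Real.coe_toNNReal _ (by positivity),
          div_mul_eq_mul_div, le_div_iff₀ hm]
        calc ‖sol p - sol p'‖ * m = m * ‖sol p - sol p'‖ := mul_comm _ _
          _ ≤ n * ‖p - p'‖ := hb
      exact hlip.continuous
    set qb : Fin n → ℝ := fun j => q j.castSucc with hqb
    set c : Fin n → ℝ := fun j => A j.castSucc (Fin.last n) with hc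
    set row : Fin n → ℝ := fun j => A (Fin.last n) j.castSucc with hrow
    set α : ℝ := A (Fin.last n) (Fin.last n) with hα
    have hsplit : ∀ (v : Fin n → ℝ) (t : ℝ) (i : Fin (n + 1)),
        A.mulVec (Fin.snoc v t) i = (∑ j, A i j.castSucc * v j) + A i (Fin.last n) * t := by
      intro v t i
      show ∑ k, A i k * (Fin.snoc v t : Fin (n+1) → ℝ) k = _
      rw [Fin.sum_univ_castSucc]
      simp [Fin.snoc_castSucc, Fin.snoc_last]
    set X : ℝ → (Fin (n + 1) → ℝ) := fun t => Fin.snoc (sol (qb + t • c)) t with hX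
    set φ : ℝ → ℝ :=
      fun t => (∑ j, row j * sol (qb + t • c) j) + α * t + q (Fin.last n) with hφ
    have hAbmul : ∀ (v : Fin n → ℝ) (j : Fin n),
        Ab.mulVec v j = ∑ k, A j.castSucc k.castSucc * v k := fun v j => rfl
    have hmulX : ∀ (t : ℝ) (j : Fin n),
        (A.mulVec (X t) + q) j.castSucc = (Ab.mulVec (sol (qb + t • c)) + (qb + t • c)) j := by
      intro t j
      simp only [Pi.add_apply, hX]
      rw [hsplit, hAbmul]
      simp only [hqb, hc, Pi.smul_apply, smul_eq_mul]
      ring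
    have hmulXlast : ∀ t : ℝ, (A.mulVec (X t) + q) (Fin.last n) = φ t := by
      intro t
      simp only [Pi.add_apply, hX, hφ]
      rw [hsplit]
    have hbuild : ∀ t : ℝ, 0 ≤ t → 0 ≤ φ t → t * φ t = 0 → IsLCPSol' A q (X t) := by
      intro t ht hφt hcomp
      have hs := hsol (qb + t • c)
      refine ⟨?_, ?_, ?_⟩
      · intro i
        induction i using Fin.lastCases with
        | last => simpa [hX] using ht
        | cast j => simpa [hX, Fin.snoc_castSucc] using hs.1 j
      · intro i
        induction i using Fin.lastCases with
        | last => rw [hmulXlast]; exact hφt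
        | cast j => rw [hmulX]; exact hs.2.1 j
      · show ∑ i, X t i * (A.mulVec (X t) + q) i = 0
        rw [Fin.sum_univ_castSucc]
        have h1 : ∀ j : Fin n, X t j.castSucc * (A.mulVec (X t) + q) j.castSucc
            = sol (qb + t • c) j * (Ab.mulVec (sol (qb + t • c)) + (qb + t • c)) j := by
          intro j
          rw [hmulX]
          congr 1
          simp [hX, Fin.snoc_castSucc]
        rw [Finset.sum_congr rfl (fun j _ => h1 j)]
        have h2 : ∑ j, sol (qb + t • c) j * (Ab.mulVec (sol (qb + t • c)) + (qb + t • c)) j = 0 :=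
          hs.2.2
        rw [h2]
        have h3 : X t (Fin.last n) * (A.mulVec (X t) + q) (Fin.last n) = t * φ t := by
          rw [hmulXlast]
          simp [hX]
        rw [h3, hcomp, add_zero]
    rcases le_or_gt 0 (φ 0) with h0 | h0
    · exact ⟨X 0, hbuild 0 le_rfl h0 (zero_mul _)⟩
    · -- need T ≥ 0 with 0 ≤ φ T, then IVT
      have hsolc : Continuous fun t : ℝ => sol (qb + t • c) :=
        hcont.comp (continuous_const.add (continuous_id.smul continuous_const))
      have hφcont : Continuous φ := by
        rw [hφ]
        refine Continuous.add (Continuous.add ?_ ?_) continuous_const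
        · exact continuous_finset_sum _ fun j _ =>
            continuous_const.mul ((continuous_apply j).comp hsolc)
        · exact continuous_const.mul continuous_id
      have hγ : 0 < (∑ j, row j * sol c j) + α := by
        have hvne : (Fin.snoc (sol c) 1 : Fin (n+1) → ℝ) ≠ 0 := by
          intro hcon
          have h1 : (Fin.snoc (sol c) 1 : Fin (n+1) → ℝ) (Fin.last n) = 0 := by
            rw [hcon]; rfl
          rw [Fin.snoc_last] at h1
          exact one_ne_zero h1
        have hnot : ¬ ∀ i, (Fin.snoc (sol c) 1 : Fin (n+1) → ℝ) i
            * (A.mulVec (Fin.snoc (sol c) 1)) i ≤ 0 :=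
          fun hzz => hvne (sign_nonreversal hA _ hzz)
        push_neg at hnot
        obtain ⟨i, hi⟩ := hnot
        induction i using Fin.lastCases with
        | last =>
          rw [hsplit, Fin.snoc_last, one_mul, mul_one] at hi
          exact hi
        | cast j =>
          exfalso
          rw [hsplit, Fin.snoc_castSucc] at hi
          have hz := (hsol c).comp_eq_zero j
          rw [Pi.add_apply, hAbmul] at hz
          simp only [hc, mul_one] at hz hi
          rw [hz] at hi
          exact lt_irrefl 0 hi
      have hscale : ∀ t : ℝ, 0 < t → sol (qb + t • c) = t • sol (t⁻¹ • qb + c) := by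
        intro t ht
        have h1 := (hsol (t⁻¹ • qb + c)).smul ht.le
        rw [smul_add, smul_smul, mul_inv_cancel₀ ht.ne', one_smul] at h1
        exact (huniq _ _ h1).symm
      set ψ : ℝ → ℝ := fun t => (∑ j, row j * sol (t⁻¹ • qb + c) j) + α with hψ
      have hφψ : ∀ t : ℝ, 0 < t → φ t = t * ψ t + q (Fin.last n) := by
        intro t ht
        have hterm : ∑ j, row j * sol (qb + t • c) j
            = t * ∑ j, row j * sol (t⁻¹ • qb + c) j := by
          rw [hscale t ht, Finset.mul_sum]
          refine Finset.sum_congr rfl fun j _ => ?_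
          simp only [Pi.smul_apply, smul_eq_mul]
          ring
        show (∑ j, row j * sol (qb + t • c) j) + α * t + q (Fin.last n)
            = t * ((∑ j, row j * sol (t⁻¹ • qb + c) j) + α) + q (Fin.last n)
        rw [hterm]
        ring
      have htend : Filter.Tendsto ψ Filter.atTop
          (nhds ((∑ j, row j * sol c j) + α)) := by
        have h1 : Filter.Tendsto (fun t : ℝ => t⁻¹ • qb + c) Filter.atTop (nhds c) := by
          have h2 := (tendsto_inv_atTop_zero :
            Filter.Tendsto (fun t : ℝ => t⁻¹) Filter.atTop (nhds 0)).smul_const (qb : Fin n → ℝ)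
          have h3 := h2.add_const c
          simpa using h3
        have h2 : Filter.Tendsto (fun t : ℝ => sol (t⁻¹ • qb + c)) Filter.atTop
            (nhds (sol c)) := (hcont.tendsto c).comp h1
        apply Filter.Tendsto.add_const
        apply tendsto_finset_sum
        intro j _
        exact (((continuous_apply j).tendsto (sol c)).comp h2).const_mul (row j)
      have hT : ∃ T : ℝ, 0 ≤ T ∧ 0 ≤ φ T := by
        set γ : ℝ := (∑ j, row j * sol c j) + α with hγdef
        have hev : ∀ᶠ t in Filter.atTop, γ / 2 < ψ t :=
          htend.eventually (eventually_gt_nhds (by linarith))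
        obtain ⟨T, hTge, hTψ⟩ :=
          ((Filter.eventually_ge_atTop (max 1 (2 * |q (Fin.last n)| / γ))).and hev).exists
        have hT1 : (1:ℝ) ≤ T := le_trans (le_max_left _ _) hTge
        have hTpos : (0:ℝ) < T := lt_of_lt_of_le one_pos hT1
        refine ⟨T, hTpos.le, ?_⟩
        rw [hφψ T hTpos]
        have h1 : 2 * |q (Fin.last n)| / γ ≤ T := le_trans (le_max_right _ _) hTge
        rw [div_le_iff₀ hγ] at h1
        have habs : -q (Fin.last n) ≤ |q (Fin.last n)| := neg_le_abs _
        have h4 := mul_le_mul_of_nonneg_left hTψ.le hTpos.le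
        have h5 : T * (γ / 2) = T * γ / 2 := by ring
        clear_value γ ψ
        linarith
      obtain ⟨T, hT0, hTpos⟩ := hT
      have hIVT := intermediate_value_Icc hT0 hφcont.continuousOn
      have h0mem : (0:ℝ) ∈ Set.Icc (φ 0) (φ T) := ⟨h0.le, hTpos⟩
      obtain ⟨t0, ht0mem, ht0⟩ := hIVT h0mem
      exact ⟨X t0, hbuild t0 ht0mem.1 (le_of_eq ht0.symm) (by rw [ht0, mul_zero])⟩


/-- A P-matrix (all principal minors positive) has a unique LCP solution for every `q`. -/
theorem stmt0 {n : ℕ} (A : Matrix (Fin n) (Fin n) ℝ)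
    (hP : ∀ (r : ℕ) (f : Fin r → Fin n), StrictMono f → 0 < (A.submatrix f f).det) :
    ∀ q : Fin n → ℝ, ∃! x : Fin n → ℝ, IsLCPSol A q x := by
  intro q
  obtain ⟨x, hx⟩ := lcp_exists n A hP q
  exact ⟨x, hx, fun y hy => lcp_unique hP (hy : IsLCPSol' A q y) hx⟩
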